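/- Let a ≠ 0, b, c be real numbers and I ⊆ ℝ a bounded interval. Then the Lebesgue measure of {x ∈ ℝ : a x² + b x + c ∈ I} is bounded by an absolute constant times |I|^{1/2}/|a|^{1/2}. -/

import Mathlib

open MeasureTheory

lemma key_quad (a b c x₁ x₂ : ℝ) (ha : 0 < a) :
    volume {x : ℝ | a * x ^ 2 + b * x + c ∈ Set.Icc x₁ x₂}
      ≤ ENNReal.ofReal (2 * Real.sqrt (x₂ - x₁) / Real.sqrt a) := by
  set e : ℝ := c - b ^ 2 / (4 * a) with he
  set m : ℝ := b / (2 * a) with hm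
  set u : ℝ := max ((x₁ - e) / a) 0 with hu
  set v : ℝ := (x₂ - e) / a with hv
  have hsub : {x : ℝ | a * x ^ 2 + b * x + c ∈ Set.Icc x₁ x₂} ⊆
      Set.Icc (-Real.sqrt v - m) (-Real.sqrt u - m) ∪
      Set.Icc (Real.sqrt u - m) (Real.sqrt v - m) := by
    intro x hx
    obtain ⟨h1, h2⟩ := hx
    have hq : a * x ^ 2 + b * x + c = a * (x + m) ^ 2 + e := by
      rw [hm, he]; field_simp; ring
    have ht1 : (x + m) ^ 2 ≤ v := by
      rw [hv, le_div_iff₀ ha]; nlinarith [hq]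
    have ht2 : u ≤ (x + m) ^ 2 := by
      refine max_le ?_ (sq_nonneg _)
      rw [div_le_iff₀ ha]; nlinarith [hq]
    have hun : 0 ≤ u := le_max_right _ _
    have habs : |x + m| ≤ Real.sqrt v := by
      apply abs_le_of_sq_le_sq _ (Real.sqrt_nonneg v)
      rwa [Real.sq_sqrt (le_trans (sq_nonneg _) ht1)]
    have habs2 : Real.sqrt u ≤ |x + m| := by
      rw [show |x + m| = Real.sqrt ((x+m)^2) by rw [Real.sqrt_sq_eq_abs]]
      exact Real.sqrt_le_sqrt ht2
    rcases abs_le.1 habs with ⟨hl, hr⟩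
    rcases le_or_gt 0 (x + m) with hs | hs
    · right
      constructor
      · have : Real.sqrt u ≤ x + m := by rwa [abs_of_nonneg hs] at habs2
        linarith
      · linarith
    · left
      have : Real.sqrt u ≤ -(x + m) := by rwa [abs_of_neg hs] at habs2
      constructor <;> [linarith; linarith]
  calc volume {x : ℝ | a * x ^ 2 + b * x + c ∈ Set.Icc x₁ x₂}
      ≤ volume (Set.Icc (-Real.sqrt v - m) (-Real.sqrt u - m)) +
        volume (Set.Icc (Real.sqrt u - m) (Real.sqrt v - m)) :=
        le_trans (measure_mono hsub) (measure_union_le _ _)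
    _ = ENNReal.ofReal (Real.sqrt v - Real.sqrt u) +
        ENNReal.ofReal (Real.sqrt v - Real.sqrt u) := by
        rw [Real.volume_Icc, Real.volume_Icc]; ring_nf
    _ ≤ ENNReal.ofReal (2 * Real.sqrt (x₂ - x₁) / Real.sqrt a) := by
        rw [show (2 : ℝ) * Real.sqrt (x₂ - x₁) / Real.sqrt a
            = Real.sqrt (x₂ - x₁) / Real.sqrt a + Real.sqrt (x₂ - x₁) / Real.sqrt a by ring,
          ENNReal.ofReal_add (by positivity) (by positivity)]
        gcongr <;>
        · rcases le_or_gt v u with hvu | huv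
          · calc Real.sqrt v - Real.sqrt u ≤ 0 := by
                  have := Real.sqrt_le_sqrt hvu; linarith
              _ ≤ _ := by positivity
          · have hun : 0 ≤ u := le_max_right _ _
            have h1 : Real.sqrt v - Real.sqrt u ≤ Real.sqrt (v - u) := by
              nlinarith [Real.sq_sqrt (show (0:ℝ) ≤ v from hun.trans huv.le),
                Real.sq_sqrt hun, Real.sq_sqrt (show (0:ℝ) ≤ v - u by linarith),
                Real.sqrt_nonneg u, Real.sqrt_nonneg (v - u),
                mul_nonneg (Real.sqrt_nonneg u) (Real.sqrt_nonneg (v - u))]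
            have h2 : v - u ≤ (x₂ - x₁) / a := by
              have : (x₁ - e) / a ≤ u := le_max_left _ _
              have hvv : v - (x₁ - e)/a = (x₂ - x₁)/a := by rw [hv]; field_simp; ring
              linarith
            calc Real.sqrt v - Real.sqrt u ≤ Real.sqrt ((x₂ - x₁) / a) :=
                  h1.trans (Real.sqrt_le_sqrt h2)
              _ = Real.sqrt (x₂ - x₁) / Real.sqrt a := Real.sqrt_div' _ ha.le

/-- For `a ≠ 0` and a bounded interval `I = [x₁,x₂]`, the Lebesgue measure of
`{x : a x² + b x + c ∈ I}` is at most an absolute constant times `|I|^{1/2}/|a|^{1/2}`. -/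
theorem stmt_3 : ∃ C : ℝ, 0 < C ∧
    ∀ (a b c x₁ x₂ : ℝ), a ≠ 0 →
      volume {x : ℝ | a * x ^ 2 + b * x + c ∈ Set.Icc x₁ x₂}
        ≤ ENNReal.ofReal (C * Real.sqrt (x₂ - x₁) / Real.sqrt |a|) := by
  refine ⟨2, by norm_num, fun a b c x₁ x₂ ha => ?_⟩
  rcases ha.lt_or_gt with hneg | hpos
  · have hset : {x : ℝ | a * x ^ 2 + b * x + c ∈ Set.Icc x₁ x₂}
        = {x : ℝ | (-a) * x ^ 2 + (-b) * x + (-c) ∈ Set.Icc (-x₂) (-x₁)} := by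
      ext x; simp only [Set.mem_setOf_eq, Set.mem_Icc]
      constructor <;> intro ⟨h1, h2⟩ <;> constructor <;> linarith
    rw [hset, abs_of_neg hneg]
    have := key_quad (-a) (-b) (-c) (-x₂) (-x₁) (by linarith)
    simpa [show -x₁ - -x₂ = x₂ - x₁ by ring] using this
  · rw [abs_of_pos hpos]
    exact key_quad a b c x₁ x₂ hpos
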